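/- Let E ⊂ ℝ be a subset of the real line and define EE⁻¹ = {x/y : x, y ∈ E, y ≠ 0}. If the packing dimension of E is strictly less than 1/2, then EE⁻¹ ≠ ℝ. -/

import Mathlib

open Set Filter
open scoped ENNReal NNReal

/-- The covering number of `s` at scale `δ`: the least number of balls of radius `δ`
needed to cover `s` (`⊤` if no finite cover exists). -/
noncomputable def coveringNumber (s : Set ℝ) (δ : ℝ) : ℕ∞ :=
  sInf {n : ℕ∞ | ∃ F : Finset ℝ, (F.card : ℕ∞) = n ∧ s ⊆ ⋃ x ∈ F, Metric.ball x δ}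

/-- The upper box (Minkowski) dimension of `s ⊆ ℝ`: the infimum of all exponents `d`
such that eventually `N(s, δ) ≤ δ^(-d)` as `δ → 0⁺`. -/
noncomputable def upperBoxDim (s : Set ℝ) : ℝ≥0∞ :=
  sInf {d : ℝ≥0∞ | ∃ r : ℝ≥0, d = r ∧ ∀ᶠ δ : ℝ in nhdsWithin 0 (Set.Ioi 0),
    (coveringNumber s δ : ℝ≥0∞) ≤ ENNReal.ofReal δ ^ (-(r : ℝ))}

/-- The packing dimension of `s ⊆ ℝ`, defined via countable covers by sets of bounded
upper box dimension. -/
noncomputable def packingDim (s : Set ℝ) : ℝ≥0∞ :=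
  ⨅ (t : ℕ → Set ℝ) (_ : s ⊆ ⋃ n, t n), ⨆ n, upperBoxDim (t n)

open MeasureTheory

lemma coveringNumber_mono {s t : Set ℝ} (h : s ⊆ t) (δ : ℝ) :
    coveringNumber s δ ≤ coveringNumber t δ := by
  apply sInf_le_sInf
  rintro n ⟨F, hF, hcov⟩
  exact ⟨F, hF, h.trans hcov⟩

lemma upperBoxDim_mono {s t : Set ℝ} (h : s ⊆ t) : upperBoxDim s ≤ upperBoxDim t := by
  apply sInf_le_sInf
  rintro d ⟨r, hr, hev⟩
  refine ⟨r, hr, hev.mono fun δ hδ => le_trans ?_ hδ⟩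
  exact_mod_cast ENat.toENNReal_le.2 (coveringNumber_mono h δ)

lemma exists_exponent {s : Set ℝ} (h : upperBoxDim s < 1 / 2) :
    ∃ r : ℝ≥0, (r : ℝ) < 1 / 2 ∧ ∀ᶠ δ : ℝ in nhdsWithin 0 (Set.Ioi 0),
      (coveringNumber s δ : ℝ≥0∞) ≤ ENNReal.ofReal δ ^ (-(r : ℝ)) := by
  obtain ⟨d, ⟨r, rfl, hev⟩, hd⟩ := sInf_lt_iff.1 h
  refine ⟨r, ?_, hev⟩
  have : (r : ℝ≥0∞) < ((1/2 : ℝ≥0) : ℝ≥0∞) := by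
    convert hd using 1
    simp [ENNReal.coe_div]
  have := ENNReal.coe_lt_coe.1 this
  calc (r:ℝ) < ((1/2 : ℝ≥0):ℝ) := by exact_mod_cast this
  _ = 1/2 := by norm_num

lemma exists_finset_cover {s : Set ℝ} {δ : ℝ} {M : ℝ≥0∞} (hM : M ≠ ⊤)
    (h : (coveringNumber s δ : ℝ≥0∞) ≤ M) :
    ∃ F : Finset ℝ, ((F.card : ℕ∞) : ℝ≥0∞) ≤ M ∧ s ⊆ ⋃ x ∈ F, Metric.ball x δ := by
  have hne : {n : ℕ∞ | ∃ F : Finset ℝ, (F.card : ℕ∞) = n ∧ s ⊆ ⋃ x ∈ F, Metric.ball x δ}.Nonempty := by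
    by_contra hc
    rw [Set.not_nonempty_iff_eq_empty] at hc
    have : coveringNumber s δ = ⊤ := by rw [coveringNumber, hc, sInf_empty]
    rw [this] at h
    simp at h
    exact hM (by simpa using h)
  obtain ⟨F, hF, hcov⟩ := csInf_mem hne
  exact ⟨F, hF ▸ h, hcov⟩

lemma div_est {x x₀ y y₀ ε R δ : ℝ} (hε : 0 < ε) (hx₀ : |x₀| ≤ R)
    (hy : ε ≤ |y|) (hy₀ : ε ≤ |y₀|) (hxx : |x - x₀| ≤ 2*δ) (hyy : |y - y₀| ≤ 2*δ) :
    |x/y - x₀/y₀| ≤ (2/ε + 2*R/ε^2) * δ := by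
  have hy' : y ≠ 0 := fun h => by simp [h] at hy; linarith
  have hy₀' : y₀ ≠ 0 := fun h => by simp [h] at hy₀; linarith
  have hR : 0 ≤ R := le_trans (abs_nonneg _) hx₀
  have hδ : 0 ≤ 2*δ := le_trans (abs_nonneg _) hxx
  have heq : x/y - x₀/y₀ = (x - x₀)/y + x₀ * (y₀ - y)/(y*y₀) := by
    field_simp; ring
  rw [heq]
  have h1 : |(x - x₀)/y| ≤ (2*δ)/ε := by
    rw [abs_div]
    exact div_le_div₀ hδ hxx hε hy
  have h2 : |x₀ * (y₀ - y)/(y*y₀)| ≤ (R*(2*δ))/(ε*ε) := by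
    rw [abs_div, abs_mul, abs_mul]
    refine div_le_div₀ (by positivity) ?_ (by positivity) ?_
    · exact mul_le_mul hx₀ (by rwa [abs_sub_comm]) (abs_nonneg _) hR
    · exact mul_le_mul hy hy₀ hε.le (abs_nonneg _)
  calc |(x - x₀)/y + x₀ * (y₀ - y)/(y*y₀)| ≤ (2*δ)/ε + (R*(2*δ))/(ε*ε) :=
        le_trans (abs_add_le _ _) (add_le_add h1 h2)
    _ = (2/ε + 2*R/ε^2) * δ := by field_simp

lemma key_null (A B : Set ℝ) (R ε : ℝ) (hε : 0 < ε)
    (hA : ∀ x ∈ A, |x| ≤ R) (hB : ∀ y ∈ B, ε ≤ |y| ∧ |y| ≤ R)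
    {a b : ℝ≥0} (hab : (a:ℝ) + (b:ℝ) < 1)
    (ha : ∀ᶠ δ : ℝ in nhdsWithin 0 (Set.Ioi 0),
      (coveringNumber A δ : ℝ≥0∞) ≤ ENNReal.ofReal δ ^ (-(a:ℝ)))
    (hb : ∀ᶠ δ : ℝ in nhdsWithin 0 (Set.Ioi 0),
      (coveringNumber B δ : ℝ≥0∞) ≤ ENNReal.ofReal δ ^ (-(b:ℝ))) :
    volume {z : ℝ | ∃ x ∈ A, ∃ y ∈ B, z = x / y} = 0 := by
  classical
  rcases Set.eq_empty_or_nonempty B with rfl | ⟨y1, hy1⟩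
  · simp
  have hRpos : 0 < R := lt_of_lt_of_le hε (le_trans (hB y1 hy1).1 (hB y1 hy1).2)
  set Q := {z : ℝ | ∃ x ∈ A, ∃ y ∈ B, z = x / y} with hQ
  set C : ℝ := 2/ε + 2*R/ε^2 with hC
  set e : ℝ := 1 - (a:ℝ) - (b:ℝ) with he
  have hepos : 0 < e := by simp [he]; linarith
  -- eventual bound
  have key : ∀ᶠ δ : ℝ in nhdsWithin 0 (Set.Ioi 0),
      volume Q ≤ ENNReal.ofReal (2*C) * ENNReal.ofReal δ ^ e := by
    filter_upwards [ha, hb, self_mem_nhdsWithin] with δ hNa hNb hδmem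
    have hδ : 0 < δ := hδmem
    have hbase0 : ENNReal.ofReal δ ≠ 0 := by
      simp [ENNReal.ofReal_eq_zero]; linarith
    have hbaseT : ENNReal.ofReal δ ≠ ⊤ := ENNReal.ofReal_ne_top
    have hMa : ENNReal.ofReal δ ^ (-(a:ℝ)) ≠ ⊤ := by
      rw [Ne, ENNReal.rpow_eq_top_iff]
      push_neg
      exact ⟨fun h => absurd h hbase0, fun h => absurd h hbaseT⟩
    have hMb : ENNReal.ofReal δ ^ (-(b:ℝ)) ≠ ⊤ := by
      rw [Ne, ENNReal.rpow_eq_top_iff]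
      push_neg
      exact ⟨fun h => absurd h hbase0, fun h => absurd h hbaseT⟩
    obtain ⟨F, hFcard, hFcov⟩ := exists_finset_cover hMa hNa
    obtain ⟨G, hGcard, hGcov⟩ := exists_finset_cover hMb hNb
    -- centers
    set c : ℝ × ℝ → ℝ := fun p =>
      if h : ∃ q : ℝ × ℝ, (q.1 ∈ A ∧ q.1 ∈ Metric.ball p.1 δ) ∧
          (q.2 ∈ B ∧ q.2 ∈ Metric.ball p.2 δ)
      then h.choose.1 / h.choose.2 else 0 with hc
    have hcover : Q ⊆ ⋃ p ∈ F ×ˢ G, Metric.closedBall (c p) (C*δ) := by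
      rintro z ⟨x, hx, y, hy, rfl⟩
      obtain ⟨u, hu, hxu⟩ : ∃ u ∈ F, x ∈ Metric.ball u δ := by
        simpa using hFcov hx
      obtain ⟨v, hv, hyv⟩ : ∃ v ∈ G, y ∈ Metric.ball v δ := by
        simpa using hGcov hy
      have hgood : ∃ q : ℝ × ℝ, (q.1 ∈ A ∧ q.1 ∈ Metric.ball u δ) ∧
          (q.2 ∈ B ∧ q.2 ∈ Metric.ball v δ) := ⟨(x, y), ⟨hx, hxu⟩, ⟨hy, hyv⟩⟩
      refine Set.mem_biUnion (Finset.mk_mem_product hu hv) ?_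
      have hval : c (u, v) = hgood.choose.1 / hgood.choose.2 := by
        rw [hc]; exact dif_pos hgood
      obtain ⟨⟨hx₀A, hx₀u⟩, ⟨hy₀B, hy₀v⟩⟩ := hgood.choose_spec
      set x₀ := hgood.choose.1
      set y₀ := hgood.choose.2
      rw [Metric.mem_closedBall, hval]
      have hdx : |x - x₀| ≤ 2*δ := by
        have h1 := Metric.mem_ball.1 hxu
        have h2 := Metric.mem_ball.1 hx₀u
        rw [Real.dist_eq] at h1 h2
        have := abs_sub_le x u x₀
        rw [abs_sub_comm u x₀] at this
        linarith
      have hdy : |y - y₀| ≤ 2*δ := by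
        have h1 := Metric.mem_ball.1 hyv
        have h2 := Metric.mem_ball.1 hy₀v
        rw [Real.dist_eq] at h1 h2
        have := abs_sub_le y v y₀
        rw [abs_sub_comm v y₀] at this
        linarith
      rw [Real.dist_eq]
      exact div_est hε (hA _ hx₀A) (hB _ hy).1 (hB _ hy₀B).1 hdx hdy
    -- measure estimate
    have hcard : ∀ p : ℝ × ℝ, volume (Metric.closedBall (c p) (C*δ)) = ENNReal.ofReal (2*(C*δ)) :=
      fun p => Real.volume_closedBall _ _
    have hFc : (F.card : ℝ≥0∞) ≤ ENNReal.ofReal δ ^ (-(a:ℝ)) := by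
      simpa using hFcard
    have hGc : (G.card : ℝ≥0∞) ≤ ENNReal.ofReal δ ^ (-(b:ℝ)) := by
      simpa using hGcard
    calc volume Q ≤ volume (⋃ p ∈ F ×ˢ G, Metric.closedBall (c p) (C*δ)) :=
          measure_mono hcover
      _ ≤ ∑ p ∈ F ×ˢ G, volume (Metric.closedBall (c p) (C*δ)) :=
          measure_biUnion_finset_le _ _
      _ = ((F ×ˢ G).card : ℝ≥0∞) * ENNReal.ofReal (2*(C*δ)) := by
          simp [hcard, Finset.sum_const, nsmul_eq_mul]
      _ = (F.card : ℝ≥0∞) * (G.card : ℝ≥0∞) * (ENNReal.ofReal (2*C) * ENNReal.ofReal δ) := by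
          rw [Finset.card_product, ← ENNReal.ofReal_mul (show (0:ℝ) ≤ 2*C by positivity)]
          have : 2*(C*δ) = 2*C*δ := by ring
          rw [this]
          push_cast
          ring
      _ ≤ ENNReal.ofReal δ ^ (-(a:ℝ)) * ENNReal.ofReal δ ^ (-(b:ℝ)) *
            (ENNReal.ofReal (2*C) * ENNReal.ofReal δ) := by
          gcongr
      _ = ENNReal.ofReal (2*C) * ENNReal.ofReal δ ^ e := by
          have hmul : ENNReal.ofReal δ ^ (-(a:ℝ)) * ENNReal.ofReal δ ^ (-(b:ℝ)) *
              ENNReal.ofReal δ ^ (1:ℝ) = ENNReal.ofReal δ ^ e := by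
            rw [← ENNReal.rpow_add _ _ hbase0 hbaseT, ← ENNReal.rpow_add _ _ hbase0 hbaseT]
            congr 1
            rw [he]; push_cast; ring
          rw [← hmul, ENNReal.rpow_one]
          ring
  -- conclude
  have htend : Tendsto (fun δ : ℝ => ENNReal.ofReal (2*C) * ENNReal.ofReal δ ^ e)
      (nhdsWithin 0 (Set.Ioi 0)) (nhds 0) := by
    have h0 : Tendsto (fun δ : ℝ => δ ^ e) (nhdsWithin 0 (Set.Ioi 0)) (nhds 0) := by
      have hcont := (Real.continuousAt_rpow_const 0 e (Or.inr hepos.le)).tendsto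
      rw [Real.zero_rpow hepos.ne'] at hcont
      exact hcont.mono_left nhdsWithin_le_nhds
    have h1 : Tendsto (fun δ : ℝ => ENNReal.ofReal (δ ^ e))
        (nhdsWithin 0 (Set.Ioi 0)) (nhds 0) := by
      have := (ENNReal.continuous_ofReal.tendsto 0).comp h0
      simpa [Function.comp_def] using this
    have h2 : Tendsto (fun δ : ℝ => ENNReal.ofReal δ ^ e)
        (nhdsWithin 0 (Set.Ioi 0)) (nhds 0) := by
      refine h1.congr' ?_
      filter_upwards [self_mem_nhdsWithin] with δ (hδ : (0:ℝ) < δ)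
      rw [← ENNReal.ofReal_rpow_of_pos hδ]
    have := ENNReal.Tendsto.const_mul (a := ENNReal.ofReal (2*C)) h2
      (Or.inr ENNReal.ofReal_ne_top)
    simpa using this
  have : volume Q ≤ 0 := ge_of_tendsto htend key
  exact le_antisymm this zero_le

theorem stmt_19 (E : Set ℝ) (hdim : packingDim E < 1 / 2) :
    {z : ℝ | ∃ x ∈ E, ∃ y ∈ E, y ≠ 0 ∧ z = x / y} ≠ Set.univ := by
  intro hQ
  rw [packingDim] at hdim
  obtain ⟨t, ht⟩ := iInf_lt_iff.1 hdim
  obtain ⟨hcov, hsup⟩ := iInf_lt_iff.1 ht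
  have hdimn : ∀ n, upperBoxDim (t n) < 1/2 := fun n => lt_of_le_of_lt (le_iSup (fun n => upperBoxDim (t n)) n) hsup
  set A : ℕ → ℕ → Set ℝ := fun n k => t n ∩ {x | |x| ≤ (k:ℝ)+1} with hA
  set B : ℕ → ℕ → Set ℝ := fun m k =>
    t m ∩ {y | 1/((k:ℝ)+1) ≤ |y| ∧ |y| ≤ (k:ℝ)+1} with hB
  have hnull : ∀ n m k : ℕ, volume {z : ℝ | ∃ x ∈ A n k, ∃ y ∈ B m k, z = x / y} = 0 := by
    intro n m k
    obtain ⟨a, haa, hae⟩ := exists_exponent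
      (lt_of_le_of_lt (upperBoxDim_mono Set.inter_subset_left) (hdimn n) :
        upperBoxDim (A n k) < 1/2)
    obtain ⟨b, hbb, hbe⟩ := exists_exponent
      (lt_of_le_of_lt (upperBoxDim_mono Set.inter_subset_left) (hdimn m) :
        upperBoxDim (B m k) < 1/2)
    have hk : (0:ℝ) < 1/((k:ℝ)+1) := by positivity
    refine key_null _ _ ((k:ℝ)+1) (1/((k:ℝ)+1)) hk ?_ ?_ (by linarith) hae hbe
    · exact fun x hx => hx.2
    · exact fun y hy => hy.2
  have hsub : {z : ℝ | ∃ x ∈ E, ∃ y ∈ E, y ≠ 0 ∧ z = x / y} ⊆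
      ⋃ (n : ℕ) (m : ℕ) (k : ℕ), {z : ℝ | ∃ x ∈ A n k, ∃ y ∈ B m k, z = x / y} := by
    rintro z ⟨x, hx, y, hy, hy0, rfl⟩
    obtain ⟨n, hn⟩ : ∃ n, x ∈ t n := by simpa using hcov hx
    obtain ⟨m, hm⟩ : ∃ m, y ∈ t m := by simpa using hcov hy
    have hyabs : 0 < |y| := abs_pos.2 hy0
    obtain ⟨k, hk⟩ := exists_nat_ge (max (max (|x|) (|y|)) (1/|y|))
    have h1 : |x| ≤ (k:ℝ)+1 := by
      have hxk : |x| ≤ (k:ℝ) := le_trans (le_trans (le_max_left _ _) (le_max_left _ _)) hk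
      linarith
    have h2 : |y| ≤ (k:ℝ)+1 := by
      have hyk : |y| ≤ (k:ℝ) := le_trans (le_trans (le_max_right _ _) (le_max_left _ _)) hk
      linarith
    have h3 : 1/((k:ℝ)+1) ≤ |y| := by
      have hik : 1/|y| ≤ (k:ℝ) := le_trans (le_max_right _ _) hk
      rw [div_le_iff₀ (by positivity)]
      rw [one_div, inv_le_iff_one_le_mul₀ hyabs] at hik
      nlinarith
    refine Set.mem_iUnion.2 ⟨n, Set.mem_iUnion.2 ⟨m, Set.mem_iUnion.2 ⟨k, ?_⟩⟩⟩
    exact ⟨x, ⟨hn, h1⟩, y, ⟨hm, ⟨h3, h2⟩⟩, rfl⟩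
  have hQ0 : volume {z : ℝ | ∃ x ∈ E, ∃ y ∈ E, y ≠ 0 ∧ z = x / y} = 0 := by
    refine measure_mono_null hsub ?_
    exact measure_iUnion_null fun n => measure_iUnion_null fun m =>
      measure_iUnion_null fun k => hnull n m k
  rw [hQ] at hQ0
  simp [Real.volume_univ] at hQ0
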